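/- There exists a constant C > 0 such that for every a ∈ ℝ \ {0}: ∫₀¹ s^{−1/2} |a + (1/2) log(1−s²)|^{−1/2} ds ≤ C |a|^{−1/2} and ∫₀¹ s^{−1/2} |a − (1/2) log(1−s²)|^{−1/2} ds ≤ C |a|^{−1/2}. -/

import Mathlib

noncomputable section

open MeasureTheory

namespace LogWeightAux

open Set

/-- `∫₀¹ s^{-1/2} ds = 2` as a Lebesgue integral. -/
lemma lint_rpow : ∫⁻ s in Set.Ioo (0:ℝ) 1, ENNReal.ofReal (s ^ (-(1:ℝ)/2)) = ENNReal.ofReal 2 := by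
  have hint : IntervalIntegrable (fun x : ℝ => x ^ (-(1:ℝ)/2)) volume 0 1 :=
    intervalIntegral.intervalIntegrable_rpow' (by norm_num)
  have hIoc : IntegrableOn (fun x : ℝ => x ^ (-(1:ℝ)/2)) (Set.Ioc 0 1) volume :=
    (intervalIntegrable_iff_integrableOn_Ioc_of_le zero_le_one).mp hint
  have hIoo : IntegrableOn (fun x : ℝ => x ^ (-(1:ℝ)/2)) (Set.Ioo 0 1) volume :=
    hIoc.mono_set Set.Ioo_subset_Ioc_self
  have hnn : 0 ≤ᵐ[volume.restrict (Set.Ioo (0:ℝ) 1)] fun x : ℝ => x ^ (-(1:ℝ)/2) :=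
    (ae_restrict_mem measurableSet_Ioo).mono fun x hx => Real.rpow_nonneg hx.1.le _
  rw [← MeasureTheory.ofReal_integral_eq_lintegral_ofReal hIoo hnn]
  congr 1
  rw [← MeasureTheory.integral_Ioc_eq_integral_Ioo, ← intervalIntegral.integral_of_le zero_le_one,
    integral_rpow (Or.inl (by norm_num))]
  rw [show (-(1:ℝ)/2 + 1) = 1/2 by norm_num, Real.one_rpow, Real.zero_rpow (by norm_num)]
  norm_num

lemma lint_left (s0 : ℝ) :
    ∫⁻ x in Set.Ioo (s0-1) s0, ENNReal.ofReal ((s0 - x) ^ (-(1:ℝ)/2)) = ENNReal.ofReal 2 := by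
  have hmp : MeasurePreserving (fun t : ℝ => s0 - t) volume volume :=
    MeasureTheory.Measure.measurePreserving_sub_left volume s0
  have hemb : MeasurableEmbedding (fun t : ℝ => s0 - t) :=
    (MeasurableEquiv.subLeft s0).measurableEmbedding
  have h := hmp.setLIntegral_comp_preimage_emb hemb
    (fun u => ENNReal.ofReal (u ^ (-(1:ℝ)/2))) (Set.Ioo 0 1)
  rw [show (fun t : ℝ => s0 - t) ⁻¹' (Set.Ioo 0 1) = Set.Ioo (s0-1) s0 by
    ext x; simp only [Set.mem_preimage, Set.mem_Ioo]
    constructor <;> (rintro ⟨h1, h2⟩; constructor <;> linarith)] at h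
  rw [h, lint_rpow]

lemma lint_right (s0 : ℝ) :
    ∫⁻ x in Set.Ioo s0 (s0+1), ENNReal.ofReal ((x - s0) ^ (-(1:ℝ)/2)) = ENNReal.ofReal 2 := by
  have hmp : MeasurePreserving (fun t : ℝ => t - s0) volume volume :=
    MeasureTheory.measurePreserving_sub_right volume s0
  have hemb : MeasurableEmbedding (fun t : ℝ => t - s0) :=
    (MeasurableEquiv.subRight s0).measurableEmbedding
  have h := hmp.setLIntegral_comp_preimage_emb hemb
    (fun u => ENNReal.ofReal (u ^ (-(1:ℝ)/2))) (Set.Ioo 0 1)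
  rw [show (fun t : ℝ => t - s0) ⁻¹' (Set.Ioo 0 1) = Set.Ioo s0 (s0+1) by
    ext x; simp only [Set.mem_preimage, Set.mem_Ioo]
    constructor <;> (rintro ⟨h1, h2⟩; constructor <;> linarith)] at h
  rw [h, lint_rpow]

/-- `∫₀¹ |s - s₀|^{-1/2} ds ≤ 4` when `s₀ ∈ [0,1]`. -/
lemma lint_abs {s0 : ℝ} (h0 : 0 ≤ s0) (h1 : s0 ≤ 1) :
    ∫⁻ s in Set.Ioo (0:ℝ) 1, ENNReal.ofReal (|s - s0| ^ (-(1:ℝ)/2)) ≤ ENNReal.ofReal 4 := by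
  have hsplit := MeasureTheory.lintegral_inter_add_diff
    (fun s : ℝ => ENNReal.ofReal (|s - s0| ^ (-(1:ℝ)/2))) (Set.Ioo 0 1)
    (measurableSet_Iio (a := s0)) (μ := volume)
  have hleft : ∫⁻ s in Set.Ioo (0:ℝ) 1 ∩ Set.Iio s0,
      ENNReal.ofReal (|s - s0| ^ (-(1:ℝ)/2)) ≤ ENNReal.ofReal 2 := by
    have hmono : ∫⁻ s in Set.Ioo (0:ℝ) 1 ∩ Set.Iio s0,
        ENNReal.ofReal (|s - s0| ^ (-(1:ℝ)/2))
        ≤ ∫⁻ s in Set.Ioo (0:ℝ) 1 ∩ Set.Iio s0,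
          ENNReal.ofReal ((s0 - s) ^ (-(1:ℝ)/2)) := by
      refine setLIntegral_mono' (measurableSet_Ioo.inter measurableSet_Iio) fun s hs => ?_
      have h2 : s < s0 := hs.2
      rw [abs_of_neg (by linarith : s - s0 < 0), neg_sub]
    refine hmono.trans ?_
    refine le_of_le_of_eq (lintegral_mono_set fun s hs => ?_) (lint_left s0)
    have h2 : s < s0 := hs.2
    have h3 : 0 < s := hs.1.1
    exact ⟨by linarith, h2⟩
  have hright : ∫⁻ s in Set.Ioo (0:ℝ) 1 \ Set.Iio s0,
      ENNReal.ofReal (|s - s0| ^ (-(1:ℝ)/2)) ≤ ENNReal.ofReal 2 := by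
    have hmono : ∫⁻ s in Set.Ioo (0:ℝ) 1 \ Set.Iio s0,
        ENNReal.ofReal (|s - s0| ^ (-(1:ℝ)/2))
        ≤ ∫⁻ s in Set.Ioo (0:ℝ) 1 \ Set.Iio s0,
          ENNReal.ofReal ((s - s0) ^ (-(1:ℝ)/2)) := by
      refine setLIntegral_mono' (measurableSet_Ioo.diff measurableSet_Iio) fun s hs => ?_
      have : s0 ≤ s := le_of_not_gt hs.2
      rw [abs_of_nonneg (by linarith : (0:ℝ) ≤ s - s0)]
    refine hmono.trans ?_
    have hsub : Set.Ioo (0:ℝ) 1 \ Set.Iio s0 ⊆ Set.Ico s0 (s0+1) := by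
      intro s hs
      have h2 : s0 ≤ s := le_of_not_gt hs.2
      exact ⟨h2, by linarith [hs.1.2]⟩
    have hIco : ∫⁻ s in Set.Ico s0 (s0+1), ENNReal.ofReal ((s - s0) ^ (-(1:ℝ)/2))
        = ENNReal.ofReal 2 := by
      rw [← lint_right s0]
      refine MeasureTheory.setLIntegral_congr ?_
      exact (MeasureTheory.Ioo_ae_eq_Ico (a := s0) (b := s0+1)).symm
    exact le_of_le_of_eq (lintegral_mono_set hsub) hIco
  calc ∫⁻ s in Set.Ioo (0:ℝ) 1, ENNReal.ofReal (|s - s0| ^ (-(1:ℝ)/2))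
      = (∫⁻ s in Set.Ioo (0:ℝ) 1 ∩ Set.Iio s0, ENNReal.ofReal (|s - s0| ^ (-(1:ℝ)/2)))
        + ∫⁻ s in Set.Ioo (0:ℝ) 1 \ Set.Iio s0, ENNReal.ofReal (|s - s0| ^ (-(1:ℝ)/2)) :=
        hsplit.symm
    _ ≤ ENNReal.ofReal 2 + ENNReal.ofReal 2 := add_le_add hleft hright
    _ = ENNReal.ofReal 4 := by rw [← ENNReal.ofReal_add] <;> norm_num

lemma key_lb {a s s0 sm : ℝ} (ha : 0 < a)
    (hsm2 : sm^2 = 1 - Real.exp (-a)) (hs02 : s0^2 = 1 - Real.exp (-(2*a)))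
    (hsmpos : 0 < sm) (hs0pos : 0 < s0)
    (hs1 : s < 1) (hsm_le : sm ≤ s) (hs0_le : sm ≤ s0) (hs0_lt1 : s0 < 1) :
    Real.exp a * sm * |s - s0| ≤ |a + (1/2) * Real.log (1 - s ^ 2)| := by
  have hspos : 0 < s := lt_of_lt_of_le hsmpos hsm_le
  set u := 1 - s^2 with hu
  set v := 1 - s0^2 with hv
  have hupos : 0 < u := by simp only [hu]; nlinarith
  have hvpos : 0 < v := by simp only [hv]; nlinarith
  have hule : u ≤ Real.exp (-a) := by
    have h2 : sm^2 ≤ s^2 := by nlinarith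
    simp only [hu]; nlinarith
  have hvle : v ≤ Real.exp (-a) := by
    have h2 : v = Real.exp (-(2*a)) := by rw [hv, hs02]; ring
    rw [h2]
    exact Real.exp_le_exp.mpr (by linarith)
  have hlogv : Real.log v = -(2*a) := by
    rw [hv, hs02]; simp [Real.log_exp]
  have hE : a + (1/2) * Real.log (1 - s ^ 2) = (1/2) * (Real.log u - Real.log v) := by
    rw [show Real.log (1 - s^2) = Real.log u from rfl, hlogv]; ring
  have claim : ∀ p q : ℝ, 0 < q → q ≤ p → p ≤ Real.exp (-a) →
      Real.exp a * (p - q) ≤ Real.log p - Real.log q := by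
    intro p q hq hqp hple
    have hppos : 0 < p := lt_of_lt_of_le hq hqp
    have hlog : Real.log (q / p) ≤ q / p - 1 := Real.log_le_sub_one_of_pos (div_pos hq hppos)
    rw [Real.log_div hq.ne' hppos.ne'] at hlog
    have h1 : (p - q) / p ≤ Real.log p - Real.log q := by
      have heq : q / p - 1 = -((p - q)/p) := by field_simp; ring
      rw [heq] at hlog; linarith
    have h2 : Real.exp a * (p - q) ≤ (p - q) / p := by
      have hinv : Real.exp a ≤ p⁻¹ := by
        rw [le_inv_comm₀ (Real.exp_pos a) hppos]
        calc p ≤ Real.exp (-a) := hple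
          _ = (Real.exp a)⁻¹ := by rw [Real.exp_neg]
      calc Real.exp a * (p - q) ≤ p⁻¹ * (p - q) :=
            mul_le_mul_of_nonneg_right hinv (by linarith)
        _ = (p - q) / p := by ring
    linarith
  have hexp := Real.exp_pos a
  rcases le_total s s0 with hcase | hcase
  · have hvu : v ≤ u := by simp only [hu, hv]; nlinarith
    have hkey := claim u v hvpos hvu hule
    have habs1 : |s - s0| = s0 - s := by rw [abs_of_nonpos (by linarith)]; ring
    have hlogle : Real.log v ≤ Real.log u := Real.log_le_log hvpos hvu
    have habs2 : |a + (1/2) * Real.log (1 - s ^ 2)| = (1/2) * (Real.log u - Real.log v) := by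
      rw [hE, abs_of_nonneg (by linarith)]
    have h5 : 2 * sm * (s0 - s) ≤ u - v := by simp only [hu, hv]; nlinarith
    have h6 : Real.exp a * (2 * sm * (s0 - s)) ≤ Real.exp a * (u - v) :=
      mul_le_mul_of_nonneg_left h5 hexp.le
    have h7 : Real.exp a * sm * (s0 - s) * 2 = Real.exp a * (2 * sm * (s0 - s)) := by ring
    rw [habs1, habs2]
    linarith
  · have hvu : u ≤ v := by simp only [hu, hv]; nlinarith
    have hkey := claim v u hupos hvu hvle
    have habs1 : |s - s0| = s - s0 := abs_of_nonneg (by linarith)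
    have hlogle : Real.log u ≤ Real.log v := Real.log_le_log hupos hvu
    have habs2 : |a + (1/2) * Real.log (1 - s ^ 2)| = (1/2) * (Real.log v - Real.log u) := by
      rw [hE, abs_of_nonpos (by linarith)]; ring
    have h5 : 2 * sm * (s - s0) ≤ v - u := by simp only [hu, hv]; nlinarith
    have h6 : Real.exp a * (2 * sm * (s - s0)) ≤ Real.exp a * (v - u) :=
      mul_le_mul_of_nonneg_left h5 hexp.le
    have h7 : Real.exp a * sm * (s - s0) * 2 = Real.exp a * (2 * sm * (s - s0)) := by ring
    rw [habs1, habs2]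
    linarith

/-- helper: constant multiple of the rpow integral -/
lemma lint_const_rpow (c : ℝ) (hc : 0 ≤ c) :
    ∫⁻ s in Set.Ioo (0:ℝ) 1, ENNReal.ofReal (c * s ^ (-(1:ℝ)/2)) = ENNReal.ofReal (2 * c) := by
  have h : ∀ s : ℝ, ENNReal.ofReal (c * s ^ (-(1:ℝ)/2))
      = ENNReal.ofReal c * ENNReal.ofReal (s ^ (-(1:ℝ)/2)) := fun s =>
    ENNReal.ofReal_mul hc
  simp_rw [h]
  rw [lintegral_const_mul' _ _ ENNReal.ofReal_ne_top, lint_rpow,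
    ← ENNReal.ofReal_mul hc]
  ring_nf

lemma hard {a : ℝ} (ha : 0 < a) :
    ∫⁻ s in Set.Ioo (0:ℝ) 1,
        ENNReal.ofReal (s ^ (-(1:ℝ)/2) * |a + (1/2) * Real.log (1 - s ^ 2)| ^ (-(1:ℝ)/2))
      ≤ ENNReal.ofReal (7 * a ^ (-(1:ℝ)/2)) := by
  have hz_ne : (-(1:ℝ)/2) ≠ 0 := by norm_num
  have hz_np : (-(1:ℝ)/2) ≤ 0 := by norm_num
  set sm := Real.sqrt (1 - Real.exp (-a)) with hsm_def
  set s0 := Real.sqrt (1 - Real.exp (-(2*a))) with hs0_def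
  have hea1 : Real.exp (-a) < 1 := by
    calc Real.exp (-a) < Real.exp 0 := Real.exp_lt_exp.mpr (by linarith)
      _ = 1 := Real.exp_zero
  have hea2 : Real.exp (-(2*a)) < 1 := by
    calc Real.exp (-(2*a)) < Real.exp 0 := Real.exp_lt_exp.mpr (by linarith)
      _ = 1 := Real.exp_zero
  have hsm2 : sm^2 = 1 - Real.exp (-a) := Real.sq_sqrt (by linarith)
  have hs02 : s0^2 = 1 - Real.exp (-(2*a)) := Real.sq_sqrt (by linarith)
  have hsmpos : 0 < sm := Real.sqrt_pos.mpr (by linarith)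
  have hs0pos : 0 < s0 := Real.sqrt_pos.mpr (by linarith)
  have hsm_le_s0 : sm ≤ s0 := by
    apply Real.sqrt_le_sqrt
    have : Real.exp (-(2*a)) ≤ Real.exp (-a) := Real.exp_le_exp.mpr (by linarith)
    linarith
  have hs0_lt1 : s0 < 1 := by
    have h2 : s0^2 < 1 := by rw [hs02]; have := Real.exp_pos (-(2*a)); linarith
    nlinarith
  have hsm_lt1 : sm < 1 := lt_of_le_of_lt hsm_le_s0 hs0_lt1
  -- lower bound for sm
  have hsm_lb : Real.sqrt a * Real.exp (-(a/2)) ≤ sm := by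
    have hmul : Real.exp a * Real.exp (-a) = 1 := by rw [← Real.exp_add]; simp
    have h1 : a * Real.exp (-a) ≤ 1 - Real.exp (-a) := by
      nlinarith [Real.add_one_le_exp a, Real.exp_pos (-a)]
    have h2 : Real.sqrt (a * Real.exp (-a)) ≤ sm := Real.sqrt_le_sqrt h1
    have h3 : Real.sqrt (a * Real.exp (-a)) = Real.sqrt a * Real.exp (-(a/2)) := by
      rw [Real.sqrt_mul ha.le]
      congr 1
      rw [show Real.exp (-a) = Real.exp (-(a/2)) ^ 2 by
        rw [sq, ← Real.exp_add]; ring_nf]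
      exact Real.sqrt_sq (Real.exp_nonneg _)
    linarith [h3 ▸ h2]
  have hexp_half_pos : 0 < Real.exp (-(a/2)) := Real.exp_pos _
  have hsqa_pos : 0 < Real.sqrt a := Real.sqrt_pos.mpr ha
  -- a ^ z = (sqrt a)⁻¹
  have haz : a ^ (-(1:ℝ)/2) = (Real.sqrt a)⁻¹ := by
    rw [show (-(1:ℝ)/2) = -(1/2) by norm_num, Real.rpow_neg ha.le, ← Real.sqrt_eq_rpow]
  set K : ℝ := Real.exp (-(a/2)) * sm⁻¹ with hK_def
  have hK_pos : 0 < K := mul_pos hexp_half_pos (inv_pos.mpr hsmpos)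
  have hK_le : K ≤ a ^ (-(1:ℝ)/2) := by
    rw [haz]
    have h1 : sm⁻¹ ≤ (Real.sqrt a * Real.exp (-(a/2)))⁻¹ :=
      inv_anti₀ (by positivity) hsm_lb
    calc K ≤ Real.exp (-(a/2)) * (Real.sqrt a * Real.exp (-(a/2)))⁻¹ :=
          mul_le_mul_of_nonneg_left h1 hexp_half_pos.le
      _ = (Real.sqrt a)⁻¹ := by
          field_simp
  -- split the integral
  set f : ℝ → ENNReal := fun s =>
    ENNReal.ofReal (s ^ (-(1:ℝ)/2) * |a + (1/2) * Real.log (1 - s ^ 2)| ^ (-(1:ℝ)/2)) with hf_def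
  have hsplit := MeasureTheory.lintegral_inter_add_diff f (Set.Ioo 0 1)
    (measurableSet_Iio (a := sm)) (μ := volume)
  -- low piece
  have hlow : ∫⁻ s in Set.Ioo (0:ℝ) 1 ∩ Set.Iio sm, f s
      ≤ ENNReal.ofReal (2 * ((2:ℝ) ^ ((1:ℝ)/2) * a ^ (-(1:ℝ)/2))) := by
    have hpt : ∀ s ∈ Set.Ioo (0:ℝ) 1 ∩ Set.Iio sm,
        f s ≤ ENNReal.ofReal (((2:ℝ) ^ ((1:ℝ)/2) * a ^ (-(1:ℝ)/2)) * s ^ (-(1:ℝ)/2)) := by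
      intro s hs
      have hs_pos : 0 < s := hs.1.1
      have hs_lt : s < sm := hs.2
      have hsq : s^2 < sm^2 := by nlinarith
      have hu_gt : Real.exp (-a) < 1 - s^2 := by rw [hsm2] at hsq; linarith
      have hlog : -a ≤ Real.log (1 - s^2) := by
        calc -a = Real.log (Real.exp (-a)) := (Real.log_exp _).symm
          _ ≤ Real.log (1 - s^2) := Real.log_le_log (Real.exp_pos _) hu_gt.le
      have hE_lb : a/2 ≤ |a + (1/2) * Real.log (1 - s ^ 2)| := by
        have h2 : a/2 ≤ a + (1/2) * Real.log (1 - s ^ 2) := by linarith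
        exact h2.trans (le_abs_self _)
      have h3 : |a + (1/2) * Real.log (1 - s ^ 2)| ^ (-(1:ℝ)/2) ≤ (a/2) ^ (-(1:ℝ)/2) :=
        Real.rpow_le_rpow_of_nonpos (by positivity) hE_lb hz_np
      have h4 : (a/2) ^ (-(1:ℝ)/2) = (2:ℝ) ^ ((1:ℝ)/2) * a ^ (-(1:ℝ)/2) := by
        rw [div_eq_mul_inv, Real.mul_rpow ha.le (by norm_num),
          ← Real.rpow_neg_one (2:ℝ), ← Real.rpow_mul (by norm_num : (0:ℝ) ≤ 2),
          show (-1 : ℝ) * (-1/2) = 1/2 by norm_num]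
        ring
      apply ENNReal.ofReal_le_ofReal
      calc s ^ (-(1:ℝ)/2) * |a + (1/2) * Real.log (1 - s ^ 2)| ^ (-(1:ℝ)/2)
          ≤ s ^ (-(1:ℝ)/2) * ((a/2) ^ (-(1:ℝ)/2)) :=
            mul_le_mul_of_nonneg_left h3 (Real.rpow_nonneg hs_pos.le _)
        _ = ((2:ℝ) ^ ((1:ℝ)/2) * a ^ (-(1:ℝ)/2)) * s ^ (-(1:ℝ)/2) := by rw [h4]; ring
    calc ∫⁻ s in Set.Ioo (0:ℝ) 1 ∩ Set.Iio sm, f s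
        ≤ ∫⁻ s in Set.Ioo (0:ℝ) 1 ∩ Set.Iio sm,
            ENNReal.ofReal (((2:ℝ) ^ ((1:ℝ)/2) * a ^ (-(1:ℝ)/2)) * s ^ (-(1:ℝ)/2)) :=
          setLIntegral_mono' (measurableSet_Ioo.inter measurableSet_Iio) hpt
      _ ≤ ∫⁻ s in Set.Ioo (0:ℝ) 1,
            ENNReal.ofReal (((2:ℝ) ^ ((1:ℝ)/2) * a ^ (-(1:ℝ)/2)) * s ^ (-(1:ℝ)/2)) :=
          lintegral_mono_set Set.inter_subset_left
      _ = ENNReal.ofReal (2 * ((2:ℝ) ^ ((1:ℝ)/2) * a ^ (-(1:ℝ)/2))) :=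
          lint_const_rpow _ (by positivity)
  -- high piece
  have hhigh : ∫⁻ s in Set.Ioo (0:ℝ) 1 \ Set.Iio sm, f s
      ≤ ENNReal.ofReal (4 * a ^ (-(1:ℝ)/2)) := by
    have hpt : ∀ s ∈ Set.Ioo (0:ℝ) 1 \ Set.Iio sm,
        f s ≤ ENNReal.ofReal (K * |s - s0| ^ (-(1:ℝ)/2)) := by
      intro s hs
      have hs_pos : 0 < s := hs.1.1
      have hs_lt1 : s < 1 := hs.1.2
      have hsm_le : sm ≤ s := le_of_not_gt hs.2
      have hkey : Real.exp a * sm * |s - s0| ≤ |a + (1/2) * Real.log (1 - s ^ 2)| :=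
        key_lb ha hsm2 hs02 hsmpos hs0pos hs_lt1 hsm_le hsm_le_s0 hs0_lt1
      have h1 : s ^ (-(1:ℝ)/2) ≤ sm ^ (-(1:ℝ)/2) :=
        Real.rpow_le_rpow_of_nonpos hsmpos hsm_le hz_np
      have h2 : |a + (1/2) * Real.log (1 - s ^ 2)| ^ (-(1:ℝ)/2)
          ≤ (Real.exp a * sm * |s - s0|) ^ (-(1:ℝ)/2) := by
        by_cases hss : s = s0
        · have hE0 : a + (1/2) * Real.log (1 - s ^ 2) = 0 := by
            rw [hss, hs02]
            rw [show (1:ℝ) - (1 - Real.exp (-(2*a))) = Real.exp (-(2*a)) by ring,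
              Real.log_exp]
            ring
          rw [hE0, hss, sub_self, abs_zero, mul_zero]
        · have hpos : 0 < Real.exp a * sm * |s - s0| := by
            have := abs_pos.mpr (sub_ne_zero.mpr hss)
            positivity
          exact Real.rpow_le_rpow_of_nonpos hpos hkey hz_np
      have h3 : (Real.exp a * sm * |s - s0|) ^ (-(1:ℝ)/2)
          = Real.exp (-(a/2)) * sm ^ (-(1:ℝ)/2) * |s - s0| ^ (-(1:ℝ)/2) := by
        rw [Real.mul_rpow (by positivity) (abs_nonneg _),
          Real.mul_rpow (Real.exp_nonneg _) hsmpos.le, ← Real.exp_mul]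
        ring_nf
      have h4 : sm ^ (-(1:ℝ)/2) * sm ^ (-(1:ℝ)/2) = sm⁻¹ := by
        rw [← Real.rpow_add hsmpos]
        norm_num [Real.rpow_neg_one]
      apply ENNReal.ofReal_le_ofReal
      calc s ^ (-(1:ℝ)/2) * |a + (1/2) * Real.log (1 - s ^ 2)| ^ (-(1:ℝ)/2)
          ≤ sm ^ (-(1:ℝ)/2) * ((Real.exp a * sm * |s - s0|) ^ (-(1:ℝ)/2)) := by
            apply mul_le_mul h1 h2 (Real.rpow_nonneg (abs_nonneg _) _)
              (Real.rpow_nonneg hsmpos.le _)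
        _ = K * |s - s0| ^ (-(1:ℝ)/2) := by
            rw [h3, hK_def, ← h4]; ring
    have hint : ∫⁻ s in Set.Ioo (0:ℝ) 1, ENNReal.ofReal (K * |s - s0| ^ (-(1:ℝ)/2))
        ≤ ENNReal.ofReal (4 * K) := by
      have hm : ∀ s : ℝ, ENNReal.ofReal (K * |s - s0| ^ (-(1:ℝ)/2))
          = ENNReal.ofReal K * ENNReal.ofReal (|s - s0| ^ (-(1:ℝ)/2)) := fun s =>
        ENNReal.ofReal_mul hK_pos.le
      simp_rw [hm]
      rw [lintegral_const_mul' _ _ ENNReal.ofReal_ne_top]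
      calc ENNReal.ofReal K * ∫⁻ s in Set.Ioo (0:ℝ) 1, ENNReal.ofReal (|s - s0| ^ (-(1:ℝ)/2))
          ≤ ENNReal.ofReal K * ENNReal.ofReal 4 :=
            mul_le_mul_right (lint_abs hs0pos.le hs0_lt1.le) _
        _ = ENNReal.ofReal (4 * K) := by
            rw [← ENNReal.ofReal_mul hK_pos.le]; ring_nf
    calc ∫⁻ s in Set.Ioo (0:ℝ) 1 \ Set.Iio sm, f s
        ≤ ∫⁻ s in Set.Ioo (0:ℝ) 1 \ Set.Iio sm,
            ENNReal.ofReal (K * |s - s0| ^ (-(1:ℝ)/2)) :=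
          setLIntegral_mono' (measurableSet_Ioo.diff measurableSet_Iio) hpt
      _ ≤ ∫⁻ s in Set.Ioo (0:ℝ) 1, ENNReal.ofReal (K * |s - s0| ^ (-(1:ℝ)/2)) :=
          lintegral_mono_set Set.diff_subset
      _ ≤ ENNReal.ofReal (4 * K) := hint
      _ ≤ ENNReal.ofReal (4 * a ^ (-(1:ℝ)/2)) :=
          ENNReal.ofReal_le_ofReal (by linarith)
  -- combine
  have hsqrt2 : (2:ℝ) ^ ((1:ℝ)/2) ≤ 1.5 := by
    rw [← Real.sqrt_eq_rpow]
    rw [show (1.5:ℝ) = Real.sqrt (1.5^2) from (Real.sqrt_sq (by norm_num)).symm]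
    exact Real.sqrt_le_sqrt (by norm_num)
  have haz_nn : 0 ≤ a ^ (-(1:ℝ)/2) := Real.rpow_nonneg ha.le _
  calc ∫⁻ s in Set.Ioo (0:ℝ) 1, f s
      = (∫⁻ s in Set.Ioo (0:ℝ) 1 ∩ Set.Iio sm, f s)
        + ∫⁻ s in Set.Ioo (0:ℝ) 1 \ Set.Iio sm, f s := hsplit.symm
    _ ≤ ENNReal.ofReal (2 * ((2:ℝ) ^ ((1:ℝ)/2) * a ^ (-(1:ℝ)/2)))
        + ENNReal.ofReal (4 * a ^ (-(1:ℝ)/2)) := add_le_add hlow hhigh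
    _ = ENNReal.ofReal (2 * ((2:ℝ) ^ ((1:ℝ)/2) * a ^ (-(1:ℝ)/2)) + 4 * a ^ (-(1:ℝ)/2)) := by
        rw [← ENNReal.ofReal_add (by positivity) (by positivity)]
    _ ≤ ENNReal.ofReal (7 * a ^ (-(1:ℝ)/2)) := by
        apply ENNReal.ofReal_le_ofReal
        nlinarith [Real.rpow_nonneg (show (0:ℝ) ≤ 2 by norm_num) ((1:ℝ)/2)]

lemma easy {a : ℝ} (ha : 0 < a) :
    ∫⁻ s in Set.Ioo (0:ℝ) 1,
        ENNReal.ofReal (s ^ (-(1:ℝ)/2) * |a - (1/2) * Real.log (1 - s ^ 2)| ^ (-(1:ℝ)/2))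
      ≤ ENNReal.ofReal (7 * a ^ (-(1:ℝ)/2)) := by
  have haz_nn : 0 ≤ a ^ (-(1:ℝ)/2) := Real.rpow_nonneg ha.le _
  have hpt : ∀ s ∈ Set.Ioo (0:ℝ) 1,
      ENNReal.ofReal (s ^ (-(1:ℝ)/2) * |a - (1/2) * Real.log (1 - s ^ 2)| ^ (-(1:ℝ)/2))
      ≤ ENNReal.ofReal (a ^ (-(1:ℝ)/2) * s ^ (-(1:ℝ)/2)) := by
    intro s hs
    have hs_pos : 0 < s := hs.1
    have hs_lt1 : s < 1 := hs.2
    have hlog : Real.log (1 - s^2) ≤ 0 :=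
      Real.log_nonpos (by nlinarith) (by nlinarith)
    have hE : a ≤ |a - (1/2) * Real.log (1 - s ^ 2)| :=
      le_trans (by linarith) (le_abs_self _)
    have h3 : |a - (1/2) * Real.log (1 - s ^ 2)| ^ (-(1:ℝ)/2) ≤ a ^ (-(1:ℝ)/2) :=
      Real.rpow_le_rpow_of_nonpos ha hE (by norm_num)
    apply ENNReal.ofReal_le_ofReal
    calc s ^ (-(1:ℝ)/2) * |a - (1/2) * Real.log (1 - s ^ 2)| ^ (-(1:ℝ)/2)
        ≤ s ^ (-(1:ℝ)/2) * a ^ (-(1:ℝ)/2) :=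
          mul_le_mul_of_nonneg_left h3 (Real.rpow_nonneg hs_pos.le _)
      _ = a ^ (-(1:ℝ)/2) * s ^ (-(1:ℝ)/2) := by ring
  calc ∫⁻ s in Set.Ioo (0:ℝ) 1,
        ENNReal.ofReal (s ^ (-(1:ℝ)/2) * |a - (1/2) * Real.log (1 - s ^ 2)| ^ (-(1:ℝ)/2))
      ≤ ∫⁻ s in Set.Ioo (0:ℝ) 1, ENNReal.ofReal (a ^ (-(1:ℝ)/2) * s ^ (-(1:ℝ)/2)) :=
        setLIntegral_mono' measurableSet_Ioo hpt
    _ = ENNReal.ofReal (2 * a ^ (-(1:ℝ)/2)) := lint_const_rpow _ haz_nn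
    _ ≤ ENNReal.ofReal (7 * a ^ (-(1:ℝ)/2)) := ENNReal.ofReal_le_ofReal (by linarith)

end LogWeightAux

/-- There is `C > 0` such that for all `a ≠ 0`,
`∫₀¹ s^{−1/2} |a ± (1/2)log(1−s²)|^{−1/2} ds ≤ C|a|^{−1/2}` (Lebesgue integrals of
nonnegative functions, so the bound in particular asserts finiteness). -/
theorem log_weight_integral_bound_half :
    ∃ C > (0:ℝ), ∀ a : ℝ, a ≠ 0 →
      (∫⁻ s in Set.Ioo (0:ℝ) 1,
          ENNReal.ofReal (s ^ (-(1:ℝ)/2) * |a + (1/2) * Real.log (1 - s ^ 2)| ^ (-(1:ℝ)/2))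
        ≤ ENNReal.ofReal (C * |a| ^ (-(1:ℝ)/2)))
      ∧ (∫⁻ s in Set.Ioo (0:ℝ) 1,
          ENNReal.ofReal (s ^ (-(1:ℝ)/2) * |a - (1/2) * Real.log (1 - s ^ 2)| ^ (-(1:ℝ)/2))
        ≤ ENNReal.ofReal (C * |a| ^ (-(1:ℝ)/2))) := by
  refine ⟨7, by norm_num, fun a ha => ?_⟩
  rcases lt_or_gt_of_ne ha with hneg | hpos
  · have hb : 0 < -a := by linarith
    have habs : |a| = -a := abs_of_neg hneg
    constructor
    · have hcong : ∀ s : ℝ,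
          ENNReal.ofReal (s ^ (-(1:ℝ)/2) * |a + (1/2) * Real.log (1 - s ^ 2)| ^ (-(1:ℝ)/2))
          = ENNReal.ofReal (s ^ (-(1:ℝ)/2) * |(-a) - (1/2) * Real.log (1 - s ^ 2)| ^ (-(1:ℝ)/2)) := by
        intro s
        rw [show a + (1/2) * Real.log (1 - s ^ 2)
            = -((-a) - (1/2) * Real.log (1 - s ^ 2)) by ring, abs_neg]
      rw [habs]
      calc ∫⁻ s in Set.Ioo (0:ℝ) 1,
            ENNReal.ofReal (s ^ (-(1:ℝ)/2) * |a + (1/2) * Real.log (1 - s ^ 2)| ^ (-(1:ℝ)/2))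
          = ∫⁻ s in Set.Ioo (0:ℝ) 1,
            ENNReal.ofReal (s ^ (-(1:ℝ)/2) * |(-a) - (1/2) * Real.log (1 - s ^ 2)| ^ (-(1:ℝ)/2)) :=
            lintegral_congr fun s => hcong s
        _ ≤ ENNReal.ofReal (7 * (-a) ^ (-(1:ℝ)/2)) := LogWeightAux.easy hb
    · have hcong : ∀ s : ℝ,
          ENNReal.ofReal (s ^ (-(1:ℝ)/2) * |a - (1/2) * Real.log (1 - s ^ 2)| ^ (-(1:ℝ)/2))
          = ENNReal.ofReal (s ^ (-(1:ℝ)/2) * |(-a) + (1/2) * Real.log (1 - s ^ 2)| ^ (-(1:ℝ)/2)) := by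
        intro s
        rw [show a - (1/2) * Real.log (1 - s ^ 2)
            = -((-a) + (1/2) * Real.log (1 - s ^ 2)) by ring, abs_neg]
      rw [habs]
      calc ∫⁻ s in Set.Ioo (0:ℝ) 1,
            ENNReal.ofReal (s ^ (-(1:ℝ)/2) * |a - (1/2) * Real.log (1 - s ^ 2)| ^ (-(1:ℝ)/2))
          = ∫⁻ s in Set.Ioo (0:ℝ) 1,
            ENNReal.ofReal (s ^ (-(1:ℝ)/2) * |(-a) + (1/2) * Real.log (1 - s ^ 2)| ^ (-(1:ℝ)/2)) :=
            lintegral_congr fun s => hcong s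
        _ ≤ ENNReal.ofReal (7 * (-a) ^ (-(1:ℝ)/2)) := LogWeightAux.hard hb
  · have habs : |a| = a := abs_of_pos hpos
    rw [habs]
    exact ⟨LogWeightAux.hard hpos, LogWeightAux.easy hpos⟩


end
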